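/- Let K be chosen uniformly from A_π, the set of tridiagonal stochastic matrices in detailed balance with π. Then for each 0 ≤ i ≤ n-1, the random variable 1/K[i,i+1] is regularly varying with exponent 1: for every a > 0, lim_{x→∞} (ax·P[1/K[i,i+1] > ax]) / (x·P[1/K[i,i+1] > x]) = 1. More precisely, the function f(x) = x·P[K[i,i+1] < 1/x] is monotone increasing and bounded above, hence converges to a positive limit β as x → ∞. -/

import Mathlib

open MeasureTheory
open scoped ENNReal

/-- Coordinate `i ∈ {1,…,n-1}` of a super-diagonal vector `X ∈ ℝ^{n-1}`, with the
conventions `X[0] = X[n] = 0`. -/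
def extCoord (m : ℕ) (X : Fin m → ℝ) (i : ℕ) : ℝ :=
  if h : 1 ≤ i ∧ i ≤ m then X ⟨i - 1, by omega⟩ else 0

/-- The super-diagonal parameterization `B_π ⊆ ℝ^{n-1}` of birth and death kernels
with stationary distribution `π`; `extCoord X i` is `K[i,i+1]`. -/
def BDSet (n : ℕ) (π : ℕ → ℝ) : Set (Fin (n-1) → ℝ) :=
  {X | ∀ i : ℕ, 1 ≤ i → i ≤ n - 1 →
    0 ≤ extCoord (n-1) X i ∧
    extCoord (n-1) X i ≤ min (1 - π (i-1) / π i * extCoord (n-1) X (i-1))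
                            (π (i+1) / π i * (1 - extCoord (n-1) X (i+1)))}

/-- The uniform (normalized Lebesgue) probability measure on `B_π` (identified with `A_π`). -/
noncomputable def unifBD (n : ℕ) (π : ℕ → ℝ) : Measure (Fin (n-1) → ℝ) :=
  (volume (BDSet n π))⁻¹ • volume.restrict (BDSet n π)

lemma extCoord_nonneg {n : ℕ} {π : ℕ → ℝ} {X : Fin (n-1) → ℝ} (hX : X ∈ BDSet n π) (i : ℕ) :
    0 ≤ extCoord (n-1) X i := by
  by_cases h : 1 ≤ i ∧ i ≤ n - 1
  · exact (hX i h.1 h.2).1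
  · rw [extCoord, dif_neg h]

lemma extCoord_le_one {n : ℕ} {π : ℕ → ℝ}
    (hπ : ∀ j, 1 ≤ j → j ≤ n → 0 < π j)
    {X : Fin (n-1) → ℝ} (hX : X ∈ BDSet n π) (i : ℕ) :
    extCoord (n-1) X i ≤ 1 := by
  by_cases h : 1 ≤ i ∧ i ≤ n - 1
  · have h2 := (hX i h.1 h.2).2
    have h3 : extCoord (n-1) X i ≤ 1 - π (i-1) / π i * extCoord (n-1) X (i-1) :=
      h2.trans (min_le_left _ _)
    have h4 : 0 ≤ π (i-1) / π i * extCoord (n-1) X (i-1) := by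
      rcases Nat.lt_or_ge i 2 with hi | hi
      · have h0 : i - 1 = 0 := by omega
        rw [h0, show extCoord (n-1) X 0 = 0 from dif_neg (by omega), mul_zero]
      · have hn2 : 2 ≤ n := by omega
        apply mul_nonneg
        · exact div_nonneg (hπ _ (by omega) (by omega)).le (hπ _ h.1 (by omega)).le
        · exact extCoord_nonneg hX _
    linarith
  · rw [extCoord, dif_neg h]; norm_num

lemma BDSet_mul_mem {n : ℕ} {π : ℕ → ℝ}
    (hπ : ∀ j, 1 ≤ j → j ≤ n → 0 < π j)
    {X : Fin (n-1) → ℝ} (hX : X ∈ BDSet n π)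
    {d : Fin (n-1) → ℝ} (hd0 : ∀ j, 0 ≤ d j) (hd1 : ∀ j, d j ≤ 1) :
    (fun j => d j * X j) ∈ BDSet n π := by
  have hcmp : ∀ k, 0 ≤ extCoord (n-1) (fun j => d j * X j) k ∧
      extCoord (n-1) (fun j => d j * X j) k ≤ extCoord (n-1) X k := by
    intro k
    by_cases h : 1 ≤ k ∧ k ≤ n - 1
    · have hXk : 0 ≤ extCoord (n-1) X k := extCoord_nonneg hX k
      rw [extCoord, dif_pos h] at hXk ⊢
      rw [show extCoord (n-1) X k = X ⟨k-1, by omega⟩ from dif_pos h]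
      exact ⟨mul_nonneg (hd0 _) hXk, mul_le_of_le_one_left hXk (hd1 _)⟩
    · rw [show extCoord (n-1) (fun j => d j * X j) k = 0 from dif_neg h]
      exact ⟨le_refl 0, extCoord_nonneg hX k⟩
  intro i hi1 hi2
  refine ⟨(hcmp i).1, le_min ?_ ?_⟩
  · have hle := ((hX i hi1 hi2).2).trans (min_le_left _ _)
    have hterm : π (i-1) / π i * extCoord (n-1) (fun j => d j * X j) (i-1)
        ≤ π (i-1) / π i * extCoord (n-1) X (i-1) := by
      rcases Nat.lt_or_ge i 2 with hi | hi
      · have h0 : i - 1 = 0 := by omega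
        rw [h0, show extCoord (n-1) X 0 = 0 from dif_neg (by omega),
          show extCoord (n-1) (fun j => d j * X j) 0 = 0 from dif_neg (by omega)]
      · exact mul_le_mul_of_nonneg_left (hcmp (i-1)).2
          (div_nonneg (hπ _ (by omega) (by omega)).le (hπ _ hi1 (by omega)).le)
    have := (hcmp i).2
    linarith
  · have hle := ((hX i hi1 hi2).2).trans (min_le_right _ _)
    have hq : 0 ≤ π (i+1) / π i :=
      div_nonneg (hπ _ (by omega) (by omega)).le (hπ _ hi1 (by omega)).le
    have hterm : π (i+1) / π i * (1 - extCoord (n-1) X (i+1)) ≤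
        π (i+1) / π i * (1 - extCoord (n-1) (fun j => d j * X j) (i+1)) :=
      mul_le_mul_of_nonneg_left (by linarith [(hcmp (i+1)).2]) hq
    have := (hcmp i).2
    linarith

lemma measurable_extCoord (m i : ℕ) : Measurable (fun X : Fin m → ℝ => extCoord m X i) := by
  by_cases h : 1 ≤ i ∧ i ≤ m
  · simp only [extCoord, dif_pos h]; exact measurable_pi_apply _
  · simp only [extCoord, dif_neg h]; exact measurable_const

lemma measurableSet_BDSet (n : ℕ) (π : ℕ → ℝ) : MeasurableSet (BDSet n π) := by
  have heq : BDSet n π = ⋂ (i : ℕ), ⋂ (_ : 1 ≤ i), ⋂ (_ : i ≤ n-1),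
      ({X : Fin (n-1) → ℝ | 0 ≤ extCoord (n-1) X i} ∩
       {X : Fin (n-1) → ℝ | extCoord (n-1) X i ≤
          min (1 - π (i-1) / π i * extCoord (n-1) X (i-1))
              (π (i+1) / π i * (1 - extCoord (n-1) X (i+1)))}) := by
    ext X
    simp only [BDSet, Set.mem_setOf_eq, Set.mem_iInter, Set.mem_inter_iff]
  rw [heq]
  refine MeasurableSet.iInter fun i => MeasurableSet.iInter fun _ =>
    MeasurableSet.iInter fun _ => MeasurableSet.inter ?_ ?_
  · exact measurableSet_le measurable_const (measurable_extCoord _ _)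
  · exact measurableSet_le (measurable_extCoord _ _)
      (Measurable.min
        (measurable_const.sub ((measurable_const.mul (measurable_extCoord _ _))))
        (measurable_const.mul (measurable_const.sub (measurable_extCoord _ _))))

lemma BDSet_subset_box {n : ℕ} {π : ℕ → ℝ}
    (hπ : ∀ j, 1 ≤ j → j ≤ n → 0 < π j) :
    BDSet n π ⊆ Set.pi Set.univ (fun _ : Fin (n-1) => Set.Icc (0:ℝ) 1) := by
  intro X hX j _
  have hj := j.isLt
  have hco : extCoord (n-1) X (j.val+1) = X j := by
    rw [extCoord, dif_pos ⟨by omega, by omega⟩]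
    exact congrArg X (Fin.ext (by simp))
  constructor
  · rw [← hco]; exact extCoord_nonneg hX _
  · rw [← hco]; exact extCoord_le_one hπ hX _

lemma BDSet_volume_le_one {n : ℕ} {π : ℕ → ℝ}
    (hπ : ∀ j, 1 ≤ j → j ≤ n → 0 < π j) : volume (BDSet n π) ≤ 1 := by
  calc volume (BDSet n π)
      ≤ volume (Set.pi Set.univ (fun _ : Fin (n-1) => Set.Icc (0:ℝ) 1)) :=
        measure_mono (BDSet_subset_box hπ)
    _ = 1 := by
        rw [volume_pi_pi]
        simp [Real.volume_Icc]

lemma BDSet_volume_pos {n : ℕ} (hn : 2 ≤ n) {π : ℕ → ℝ}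
    (hπ : ∀ j, 1 ≤ j → j ≤ n → 0 < π j) : 0 < volume (BDSet n π) := by
  have hne : (Finset.Icc 1 n).Nonempty := ⟨1, by simp; omega⟩
  set m₀ := (Finset.Icc 1 n).inf' hne π with hm₀def
  set M₀ := (Finset.Icc 1 n).sup' hne π with hM₀def
  have hm₀pos : 0 < m₀ := by
    rw [hm₀def, Finset.lt_inf'_iff]
    intro b hb
    rw [Finset.mem_Icc] at hb
    exact hπ b hb.1 hb.2
  have hmle : ∀ j, 1 ≤ j → j ≤ n → m₀ ≤ π j := fun j h1 h2 =>
    Finset.inf'_le π (Finset.mem_Icc.mpr ⟨h1, h2⟩)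
  have hMge : ∀ j, 1 ≤ j → j ≤ n → π j ≤ M₀ := fun j h1 h2 =>
    Finset.le_sup' π (Finset.mem_Icc.mpr ⟨h1, h2⟩)
  have hmM : m₀ ≤ M₀ := (hmle 1 le_rfl (by omega)).trans (hMge 1 le_rfl (by omega))
  have hM₀pos : 0 < M₀ := lt_of_lt_of_le hm₀pos hmM
  set ε := m₀ / (2 * M₀) with hεdef
  have hεpos : 0 < ε := div_pos hm₀pos (by linarith)
  have hεhalf : ε ≤ 1/2 := by
    rw [hεdef, div_le_div_iff₀ (by linarith) (by norm_num)]
    linarith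
  have hbox : Set.pi Set.univ (fun _ : Fin (n-1) => Set.Ioo (0:ℝ) ε) ⊆ BDSet n π := by
    intro X hXbox
    have hXj : ∀ j : Fin (n-1), 0 < X j ∧ X j < ε := by
      intro j
      have := hXbox j (Set.mem_univ j)
      exact ⟨this.1, this.2⟩
    have hcoord : ∀ k, 0 ≤ extCoord (n-1) X k ∧ extCoord (n-1) X k ≤ ε := by
      intro k
      by_cases h : 1 ≤ k ∧ k ≤ n - 1
      · rw [extCoord, dif_pos h]
        exact ⟨(hXj _).1.le, (hXj _).2.le⟩
      · rw [extCoord, dif_neg h]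
        exact ⟨le_rfl, hεpos.le⟩
    intro i hi1 hi2
    have hie : extCoord (n-1) X i < ε := by
      rw [extCoord, dif_pos ⟨hi1, hi2⟩]; exact (hXj _).2
    refine ⟨(hcoord i).1, le_min ?_ ?_⟩
    · -- extCoord X i ≤ 1 - π(i-1)/π i * extCoord X (i-1)
      have hterm : π (i-1) / π i * extCoord (n-1) X (i-1) ≤ 1/2 := by
        rcases Nat.lt_or_ge i 2 with hilt | hige
        · have h0 : i - 1 = 0 := by omega
          rw [h0, show extCoord (n-1) X 0 = 0 from dif_neg (by omega), mul_zero]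
          norm_num
        · have hr : π (i-1) / π i ≤ M₀ / m₀ :=
            div_le_div₀ (by linarith [hM₀pos]) (hMge _ (by omega) (by omega))
              hm₀pos (hmle _ hi1 (by omega))
          have hrpos : 0 ≤ π (i-1) / π i :=
            div_nonneg (hπ _ (by omega) (by omega)).le (hπ _ hi1 (by omega)).le
          calc π (i-1) / π i * extCoord (n-1) X (i-1)
              ≤ (M₀ / m₀) * ε := by
                apply mul_le_mul hr (hcoord _).2 (hcoord _).1
                positivity
            _ = 1/2 := by
                rw [hεdef]; field_simp
      linarith
    · -- extCoord X i ≤ π(i+1)/π i * (1 - extCoord X (i+1))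
      have hq : (2:ℝ) * ε ≤ π (i+1) / π i := by
        have : (2:ℝ) * ε = m₀ / M₀ := by rw [hεdef]; field_simp
        rw [this]
        exact div_le_div₀ (hπ _ (by omega) (by omega)).le (hmle _ (by omega) (by omega))
          (hπ _ hi1 (by omega)) (hMge _ hi1 (by omega))
      have h1e : (1:ℝ)/2 ≤ 1 - extCoord (n-1) X (i+1) := by
        have := (hcoord (i+1)).2
        linarith
      have : (2*ε) * (1/2 : ℝ) ≤ π (i+1) / π i * (1 - extCoord (n-1) X (i+1)) := by
        apply mul_le_mul hq h1e (by norm_num)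
        exact div_nonneg (hπ _ (by omega) (by omega)).le (hπ _ hi1 (by omega)).le
      calc extCoord (n-1) X i ≤ ε := (hcoord i).2
        _ = (2*ε) * (1/2 : ℝ) := by ring
        _ ≤ _ := this
  calc (0:ℝ≥0∞) < ENNReal.ofReal ε ^ (n-1) := by
        apply ENNReal.pow_pos
        rwa [ENNReal.ofReal_pos]
    _ = volume (Set.pi Set.univ (fun _ : Fin (n-1) => Set.Ioo (0:ℝ) ε)) := by
        rw [volume_pi_pi]
        simp [Real.volume_Ioo]
    _ ≤ volume (BDSet n π) := measure_mono hbox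

lemma volume_scale_preimage {m : ℕ} (j₀ : Fin m) {c : ℝ} (hc : 0 < c) (A : Set (Fin m → ℝ)) :
    volume ((fun X : Fin m → ℝ => fun j => (if j = j₀ then c else 1) * X j) ⁻¹' A)
      = ENNReal.ofReal c⁻¹ * volume A := by
  set d : Fin m → ℝ := fun j => if j = j₀ then c else 1 with hd
  have hdet : LinearMap.det (Matrix.toLin' (Matrix.diagonal d)) = c := by
    rw [LinearMap.det_toLin', Matrix.det_diagonal, hd]
    simp [Finset.prod_ite_eq']
  have happ : (fun X : Fin m → ℝ => fun j => d j * X j) = ⇑(Matrix.toLin' (Matrix.diagonal d)) := by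
    funext X j
    simp [Matrix.toLin'_apply, Matrix.mulVec_diagonal]
  rw [happ, Measure.addHaar_preimage_linearMap volume (by rw [hdet]; exact hc.ne') A, hdet,
    abs_of_pos (by positivity)]

lemma volume_hyperplane {m : ℕ} (j₀ : Fin m) (a : ℝ) :
    volume {X : Fin m → ℝ | X j₀ = a} = 0 := by
  have heq : {X : Fin m → ℝ | X j₀ = a}
      = Set.pi Set.univ (fun j => if j = j₀ then ({a} : Set ℝ) else Set.univ) := by
    ext X
    simp only [Set.mem_setOf_eq, Set.mem_pi, Set.mem_univ, forall_true_left]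
    constructor
    · intro h j
      by_cases hj : j = j₀
      · subst hj; simp [h]
      · simp [hj]
    · intro h
      have := h j₀
      simpa using this
  rw [heq, volume_pi_pi]
  apply Finset.prod_eq_zero (Finset.mem_univ j₀)
  simp

lemma V_scaling_mono {n : ℕ} {π : ℕ → ℝ}
    (hπ : ∀ j, 1 ≤ j → j ≤ n → 0 < π j) (j₀ : Fin (n-1)) {s t : ℝ}
    (hs : 0 < s) (hst : s ≤ t) :
    volume (BDSet n π ∩ {X | X j₀ < t})
      ≤ ENNReal.ofReal (t/s) * volume (BDSet n π ∩ {X | X j₀ < s}) := by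
  have ht : 0 < t := lt_of_lt_of_le hs hst
  set c := s / t with hcdef
  have hc : 0 < c := div_pos hs ht
  have hc1 : c ≤ 1 := by rw [hcdef, div_le_one ht]; exact hst
  have hsub : BDSet n π ∩ {X | X j₀ < t} ⊆
      (fun X : Fin (n-1) → ℝ => fun j => (if j = j₀ then c else 1) * X j) ⁻¹'
        (BDSet n π ∩ {X | X j₀ < s}) := by
    rintro X ⟨hXB, hXt⟩
    constructor
    · exact BDSet_mul_mem hπ hXB
        (fun j => by by_cases hj : j = j₀ <;> simp [hj, hc.le])
        (fun j => by by_cases hj : j = j₀ <;> simp [hj, hc1])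
    · show (if j₀ = j₀ then c else 1) * X j₀ < s
      rw [if_pos rfl]
      calc c * X j₀ < c * t := mul_lt_mul_of_pos_left hXt hc
        _ = s := by rw [hcdef]; field_simp
  calc volume (BDSet n π ∩ {X | X j₀ < t})
      ≤ volume ((fun X : Fin (n-1) → ℝ => fun j => (if j = j₀ then c else 1) * X j) ⁻¹'
          (BDSet n π ∩ {X | X j₀ < s})) := measure_mono hsub
    _ = ENNReal.ofReal c⁻¹ * volume (BDSet n π ∩ {X | X j₀ < s}) :=
        volume_scale_preimage j₀ hc _
    _ = ENNReal.ofReal (t/s) * volume (BDSet n π ∩ {X | X j₀ < s}) := by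
        rw [hcdef, inv_div]

/-- Regular variation: for `K` uniform on `A_π`, the function
`f(x) = x·P[K[i,i+1] < 1/x]` is monotone increasing on `(0,∞)` and bounded above,
hence converges to a positive limit `β`, and `1/K[i,i+1]` is regularly varying with
exponent 1: `(ax·P[1/K[i,i+1] > ax])/(x·P[1/K[i,i+1] > x]) → 1` for every `a > 0`. -/
theorem stmt_8 (n : ℕ) (hn : 2 ≤ n) (π : ℕ → ℝ) (hπ : ∀ j, 1 ≤ j → j ≤ n → 0 < π j)
    (hπsum : ∑ j ∈ Finset.Icc 1 n, π j = 1)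
    (i : ℕ) (hi1 : 1 ≤ i) (hi2 : i ≤ n - 1) :
    MonotoneOn (fun x : ℝ => x * (unifBD n π {X | extCoord (n-1) X i < 1/x}).toReal)
      (Set.Ioi (0:ℝ)) ∧
    (∃ A : ℝ, ∀ x : ℝ, 0 < x →
      x * (unifBD n π {X | extCoord (n-1) X i < 1/x}).toReal ≤ A) ∧
    (∃ β : ℝ, 0 < β ∧
      Filter.Tendsto (fun x : ℝ => x * (unifBD n π {X | extCoord (n-1) X i < 1/x}).toReal)
        Filter.atTop (nhds β)) ∧
    (∀ a : ℝ, 0 < a →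
      Filter.Tendsto
        (fun x : ℝ =>
          (a * x * (unifBD n π {X | extCoord (n-1) X i < 1/(a*x)}).toReal) /
            (x * (unifBD n π {X | extCoord (n-1) X i < 1/x}).toReal))
        Filter.atTop (nhds 1)) := by
  have hi2' : i - 1 < n - 1 := by omega
  set j₀ : Fin (n-1) := ⟨i-1, hi2'⟩ with hj₀
  -- basic measure facts
  set μB := volume (BDSet n π) with hμB
  have hpos : 0 < μB := BDSet_volume_pos hn hπ
  have hle1 : μB ≤ 1 := BDSet_volume_le_one hπ
  have hne_top : μB ≠ ⊤ := (lt_of_le_of_lt hle1 ENNReal.one_lt_top).ne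
  have hinv_ne_top : μB⁻¹ ≠ ⊤ := ENNReal.inv_ne_top.mpr hpos.ne'
  set V : ℝ → ℝ≥0∞ := fun t => volume (BDSet n π ∩ {X | X j₀ < t}) with hV
  have hVle : ∀ t, V t ≤ μB := fun t => measure_mono Set.inter_subset_left
  have hVne_top : ∀ t, V t ≠ ⊤ := fun t => (lt_of_le_of_lt (hVle t)
    (lt_of_le_of_lt hle1 ENNReal.one_lt_top)).ne
  -- the sets in the statement
  have hSet : ∀ c : ℝ, {X : Fin (n-1) → ℝ | extCoord (n-1) X i < c} = {X | X j₀ < c} := by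
    intro c
    ext X
    rw [Set.mem_setOf_eq, Set.mem_setOf_eq, extCoord, dif_pos ⟨hi1, hi2⟩]
  have hSmeas : ∀ c : ℝ, MeasurableSet {X : Fin (n-1) → ℝ | X j₀ < c} := fun c =>
    measurableSet_lt (measurable_pi_apply j₀) measurable_const
  have happly : ∀ c : ℝ, unifBD n π {X | extCoord (n-1) X i < c} = μB⁻¹ * V c := by
    intro c
    rw [hSet c, unifBD, Measure.smul_apply, smul_eq_mul,
      Measure.restrict_apply (hSmeas c), Set.inter_comm]
  -- the function F
  set F : ℝ → ℝ := fun x => x * (μB⁻¹ * V (1/x)).toReal with hF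
  have hFeq : (fun x : ℝ => x * (unifBD n π {X | extCoord (n-1) X i < 1/x}).toReal) = F := by
    funext x; rw [hF, happly]
  set cinv : ℝ := μB⁻¹.toReal with hcinv
  have hμBtoReal_pos : 0 < μB.toReal := ENNReal.toReal_pos hpos.ne' hne_top
  have hcinv_eq : cinv = μB.toReal⁻¹ := by rw [hcinv, ENNReal.toReal_inv]
  have hcinv_pos : 0 < cinv := by rw [hcinv_eq]; positivity
  have hFval : ∀ x, F x = x * (cinv * (V (1/x)).toReal) := by
    intro x
    simp only [hF]
    rw [ENNReal.toReal_mul]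
  -- nonnegativity of X j₀ on BDSet
  have hX0 : ∀ X ∈ BDSet n π, 0 ≤ X j₀ ∧ X j₀ ≤ 1 := by
    intro X hX
    have := BDSet_subset_box hπ hX j₀ (Set.mem_univ _)
    exact this
  -- smallness: V t ≤ ofReal t
  have hVsmall : ∀ t : ℝ, V t ≤ ENNReal.ofReal t := by
    intro t
    have hsub : BDSet n π ∩ {X | X j₀ < t} ⊆
        Set.pi Set.univ (fun j => if j = j₀ then Set.Ico (0:ℝ) t else Set.Icc (0:ℝ) 1) := by
      rintro X ⟨hXB, hXt⟩ j _
      by_cases hj : j = j₀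
      · subst hj
        simp only [if_pos rfl]
        exact ⟨(hX0 X hXB).1, hXt⟩
      · simp only [if_neg hj]
        exact BDSet_subset_box hπ hXB j (Set.mem_univ _)
    calc V t ≤ volume (Set.pi Set.univ
          (fun j => if j = j₀ then Set.Ico (0:ℝ) t else Set.Icc (0:ℝ) 1)) :=
            measure_mono hsub
      _ = ENNReal.ofReal t := by
          rw [volume_pi_pi]
          have : ∀ j : Fin (n-1), volume (if j = j₀ then Set.Ico (0:ℝ) t else Set.Icc (0:ℝ) 1)
              = if j = j₀ then ENNReal.ofReal t else 1 := by
            intro j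
            by_cases hj : j = j₀ <;> simp [hj, Real.volume_Ico, Real.volume_Icc]
          rw [Finset.prod_congr rfl (fun j _ => this j), Finset.prod_ite_eq']
          simp
  -- bound on F
  have hFbound : ∀ x : ℝ, 0 < x → F x ≤ cinv := by
    intro x hx
    have h1 : (V (1/x)).toReal ≤ 1/x := by
      have := ENNReal.toReal_mono ENNReal.ofReal_ne_top (hVsmall (1/x))
      rwa [ENNReal.toReal_ofReal (by positivity)] at this
    calc F x = x * (cinv * (V (1/x)).toReal) := hFval x
      _ ≤ x * (cinv * (1/x)) := by
          apply mul_le_mul_of_nonneg_left _ hx.le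
          exact mul_le_mul_of_nonneg_left h1 hcinv_pos.le
      _ = cinv := by field_simp
  -- F vanishes on nonpositive reals
  have hFzero : ∀ x : ℝ, x ≤ 0 → F x = 0 := by
    intro x hx
    rcases eq_or_lt_of_le hx with rfl | hx'
    · rw [hF]; simp
    · have hempty : BDSet n π ∩ {X | X j₀ < 1/x} = ∅ := by
        apply Set.eq_empty_of_forall_notMem
        rintro X ⟨hXB, hXt⟩
        have h1 : (1:ℝ)/x < 0 := by
          apply div_neg_of_pos_of_neg one_pos hx'
        have := (hX0 X hXB).1
        rw [Set.mem_setOf_eq] at hXt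
        linarith
      have hVz : V (1/x) = 0 := by
        simp only [hV]
        rw [hempty]
        exact measure_empty
      rw [hFval x, hVz]
      simp
  have hFnonneg : ∀ x : ℝ, 0 < x → 0 ≤ F x := by
    intro x hx
    rw [hFval]
    positivity
  -- monotonicity on positives
  have hFmono_pos : ∀ x y : ℝ, 0 < x → x ≤ y → F x ≤ F y := by
    intro x y hx hxy
    have hy : 0 < y := lt_of_lt_of_le hx hxy
    have hst : 1/y ≤ 1/x := one_div_le_one_div_of_le hx hxy
    have hsy : 0 < 1/y := by positivity
    have hkey := V_scaling_mono hπ j₀ hsy hst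
    have hts : (1/x) / (1/y) = y / x := by field_simp
    rw [hts] at hkey
    have hmul_ne_top : ENNReal.ofReal (y/x) * V (1/y) ≠ ⊤ :=
      ENNReal.mul_ne_top ENNReal.ofReal_ne_top (hVne_top _)
    have h2 : (V (1/x)).toReal ≤ (y/x) * (V (1/y)).toReal := by
      have := ENNReal.toReal_mono hmul_ne_top hkey
      rwa [ENNReal.toReal_mul, ENNReal.toReal_ofReal (by positivity)] at this
    rw [hFval x, hFval y]
    have hxy' : x * (cinv * ((y/x) * (V (1/y)).toReal)) = y * (cinv * (V (1/y)).toReal) := by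
      field_simp
    calc x * (cinv * (V (1/x)).toReal)
        ≤ x * (cinv * ((y/x) * (V (1/y)).toReal)) := by
          apply mul_le_mul_of_nonneg_left _ hx.le
          exact mul_le_mul_of_nonneg_left h2 hcinv_pos.le
      _ = y * (cinv * (V (1/y)).toReal) := hxy'
  have hFmono : Monotone F := by
    intro x y hxy
    rcases le_or_gt y 0 with hy | hy
    · rw [hFzero x (hxy.trans hy), hFzero y hy]
    · rcases le_or_gt x 0 with hx | hx
      · rw [hFzero x hx]; exact hFnonneg y hy
      · exact hFmono_pos x y hx hxy
  -- F 1 = 1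
  have hVone : V 1 = μB := by
    apply le_antisymm (hVle 1)
    have hsub : BDSet n π ⊆ (BDSet n π ∩ {X | X j₀ < 1}) ∪ {X | X j₀ = (1:ℝ)} := by
      intro X hX
      rcases lt_or_eq_of_le (hX0 X hX).2 with h | h
      · exact Or.inl ⟨hX, h⟩
      · exact Or.inr h
    calc μB ≤ volume ((BDSet n π ∩ {X | X j₀ < 1}) ∪ {X | X j₀ = (1:ℝ)}) :=
          measure_mono hsub
      _ ≤ V 1 + volume {X : Fin (n-1) → ℝ | X j₀ = (1:ℝ)} := measure_union_le _ _
      _ = V 1 := by rw [volume_hyperplane, add_zero]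
  have hFone : F 1 = 1 := by
    rw [hFval]
    norm_num
    rw [hVone, hcinv_eq]
    field_simp
  -- convergence
  have hbdd : BddAbove (Set.range F) := by
    refine ⟨cinv, ?_⟩
    rintro _ ⟨x, rfl⟩
    rcases le_or_gt x 0 with hx | hx
    · rw [hFzero x hx]; exact hcinv_pos.le
    · exact hFbound x hx
  have htend : Filter.Tendsto F Filter.atTop (nhds (⨆ x, F x)) :=
    tendsto_atTop_ciSup hFmono hbdd
  have hβpos : 0 < ⨆ x, F x := lt_of_lt_of_le one_pos (hFone ▸ le_ciSup hbdd 1)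
  have hFpt : ∀ y : ℝ, y * (unifBD n π {X | extCoord (n-1) X i < 1/y}).toReal = F y := by
    intro y
    rw [happly]
  rw [hFeq]
  refine ⟨hFmono.monotoneOn _, ⟨cinv, fun x hx => by rw [hFpt x]; exact hFbound x hx⟩,
    ⟨⨆ x, F x, hβpos, htend⟩, ?_⟩
  intro a ha
  have hnum : Filter.Tendsto (fun x : ℝ => F (a * x)) Filter.atTop (nhds (⨆ x, F x)) := by
    apply htend.comp
    exact Filter.Tendsto.const_mul_atTop ha Filter.tendsto_id
  have hratio := hnum.div htend hβpos.ne'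
  rw [div_self hβpos.ne'] at hratio
  have heq4 : (fun x : ℝ => (a * x * (unifBD n π {X | extCoord (n-1) X i < 1/(a*x)}).toReal) /
      (x * (unifBD n π {X | extCoord (n-1) X i < 1/x}).toReal)) = (fun x => F (a*x)) / F := by
    funext x
    rw [Pi.div_apply, hFpt (a*x), hFpt x]
  rw [heq4]
  exact hratio
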